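/- Fix ρ ∈ [0,1], K ≥ 1, real numbers μ_{i0}, σ_{i0}², and suppose n real numbers are partitioned into K groups, where group i consists of values X^i_1, …, X^i_{T_i} with T_i ≥ 1 and ∑_{i=1}^K T_i = n. Let μ̂_i and σ̂_i² be the empirical mean and empirical variance of group i, let μ̂ and σ̂² be the empirical mean and empirical variance of all n values pooled together, and set MV̂^ρ := (1−ρ)σ̂² − ρμ̂. Then MV̂^ρ − ((1−ρ)σ_{i0}² − ρμ_{i0}) ≤ (1/n)·∑_{i=1}^K T_i·Δ̂_i + (1/n²)·∑_{i=1}^K ∑_{h ≠ i} T_i·T_h·Γ̂_{i,h}², where Δ̂_i := (1−ρ)(σ̂_i² − σ_{i0}²) − ρ(μ̂_i − μ_{i0}) and Γ̂_{i,h} := |μ̂_i − μ̂_h|. -/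

import Mathlib

open Finset

/-- Pathwise regret decomposition (Eq. (7) of Sani, Lazaric, Munos (2012)):
a deterministic inequality for `n` real numbers partitioned into `K` groups. -/
theorem regret_decomposition (K : ℕ) (hK : 1 ≤ K) (ρ : ℝ) (hρ : ρ ∈ Set.Icc (0 : ℝ) 1)
    (μ0 σ0 : ℝ) (T : Fin K → ℕ) (hT : ∀ i, 1 ≤ T i) (n : ℕ) (hn : ∑ i, T i = n)
    (X : (i : Fin K) → Fin (T i) → ℝ) :
    -- group empirical means and variances
    (fun (muHat : Fin K → ℝ) (sigmaHat2 : Fin K → ℝ) (muPool : ℝ) (sigmaPool2 : ℝ) =>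
      ((1 - ρ) * sigmaPool2 - ρ * muPool) - ((1 - ρ) * σ0 - ρ * μ0) ≤
        (n : ℝ)⁻¹ * ∑ i, (T i : ℝ) *
            ((1 - ρ) * (sigmaHat2 i - σ0) - ρ * (muHat i - μ0)) +
          ((n : ℝ) ^ 2)⁻¹ * ∑ i, ∑ h ∈ univ \ {i},
            (T i : ℝ) * (T h : ℝ) * |muHat i - muHat h| ^ 2)
      (fun i => (T i : ℝ)⁻¹ * ∑ t, X i t)
      (fun i => (T i : ℝ)⁻¹ * ∑ t, (X i t - (T i : ℝ)⁻¹ * ∑ s, X i s) ^ 2)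
      ((n : ℝ)⁻¹ * ∑ i, ∑ t, X i t)
      ((n : ℝ)⁻¹ * ∑ i, ∑ t, (X i t - (n : ℝ)⁻¹ * ∑ j, ∑ s, X j s) ^ 2) := by
  simp only
  -- basic positivity
  have hnK : 1 ≤ n := by
    obtain ⟨i0⟩ : Nonempty (Fin K) := Fin.pos_iff_nonempty.mp hK
    calc 1 ≤ T i0 := hT i0
    _ ≤ ∑ i, T i := Finset.single_le_sum (fun _ _ => Nat.zero_le _) (mem_univ i0)
    _ = n := hn
  have hn0 : (n : ℝ) ≠ 0 := by positivity
  have hnpos : (0:ℝ) < n := by positivity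
  have hT0 : ∀ i, (T i : ℝ) ≠ 0 := fun i => by
    have := hT i; positivity
  have hTpos : ∀ i, (0:ℝ) < T i := fun i => by
    have := hT i; positivity
  set m : Fin K → ℝ := fun i => (T i : ℝ)⁻¹ * ∑ t, X i t with hm
  set v : Fin K → ℝ := fun i => (T i : ℝ)⁻¹ * ∑ t, (X i t - m i) ^ 2 with hv
  set μ : ℝ := (n : ℝ)⁻¹ * ∑ i, ∑ t, X i t with hμdef
  set V : ℝ := (n : ℝ)⁻¹ * ∑ i, ∑ t, (X i t - μ) ^ 2 with hVdef
  show ((1 - ρ) * V - ρ * μ) - ((1 - ρ) * σ0 - ρ * μ0) ≤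
      (n : ℝ)⁻¹ * ∑ i, (T i : ℝ) * ((1 - ρ) * (v i - σ0) - ρ * (m i - μ0)) +
        ((n : ℝ) ^ 2)⁻¹ * ∑ i, ∑ h ∈ univ \ {i},
          (T i : ℝ) * (T h : ℝ) * |m i - m h| ^ 2
  -- group sums
  have hS : ∀ i, ∑ t, X i t = (T i : ℝ) * m i := fun i => by
    simp only [hm]; rw [← mul_assoc, mul_inv_cancel₀ (hT0 i), one_mul]
  have hSv : ∀ i, ∑ t, (X i t - m i) ^ 2 = (T i : ℝ) * v i := fun i => by
    simp only [hv]; rw [← mul_assoc, mul_inv_cancel₀ (hT0 i), one_mul]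
  -- pooled mean
  have hTn : ∑ i, (T i : ℝ) = (n : ℝ) := by
    rw [← hn]; push_cast; ring
  have hμ : ∑ i, (T i : ℝ) * m i = (n : ℝ) * μ := by
    rw [hμdef, ← mul_assoc, mul_inv_cancel₀ hn0, one_mul]
    exact Finset.sum_congr rfl fun i _ => (hS i).symm
  -- per-group variance decomposition
  have hgrp : ∀ i, ∑ t, (X i t - μ) ^ 2
      = (T i : ℝ) * v i + (T i : ℝ) * (m i - μ) ^ 2 := by
    intro i
    have h0 : ∑ t, (X i t - m i) = 0 := by
      rw [Finset.sum_sub_distrib, hS i, Finset.sum_const, Finset.card_univ,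
        Fintype.card_fin, nsmul_eq_mul, sub_self]
    calc ∑ t, (X i t - μ) ^ 2
        = ∑ t, ((X i t - m i) ^ 2 + 2 * (m i - μ) * (X i t - m i) + (m i - μ) ^ 2) := by
          apply Finset.sum_congr rfl; intro t _; ring
      _ = ∑ t, (X i t - m i) ^ 2 + 2 * (m i - μ) * (∑ t, (X i t - m i))
            + (T i : ℝ) * (m i - μ) ^ 2 := by
          rw [Finset.sum_add_distrib, Finset.sum_add_distrib, ← Finset.mul_sum,
            Finset.sum_const, Finset.card_univ, Fintype.card_fin, nsmul_eq_mul]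
      _ = (T i : ℝ) * v i + (T i : ℝ) * (m i - μ) ^ 2 := by
          rw [h0, hSv i]; ring
  -- pooled variance decomposition
  have hV : (n : ℝ) * V = ∑ i, (T i : ℝ) * v i + ∑ i, (T i : ℝ) * (m i - μ) ^ 2 := by
    rw [hVdef, ← mul_assoc, mul_inv_cancel₀ hn0, one_mul, ← Finset.sum_add_distrib]
    exact Finset.sum_congr rfl fun i _ => hgrp i
  -- Cauchy–Schwarz step
  have hCS : ∀ i, (n : ℝ) * ((T i : ℝ) * (m i - μ) ^ 2)
      ≤ ∑ h, (T i : ℝ) * (T h : ℝ) * (m i - m h) ^ 2 := by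
    intro i
    have h1 : (n : ℝ) * (m i - μ) = ∑ h, (T h : ℝ) * (m i - m h) := by
      simp only [mul_sub]
      rw [Finset.sum_sub_distrib, hμ, ← Finset.sum_mul, hTn]
    have h2 : ((n : ℝ) * (m i - μ)) ^ 2
        ≤ (∑ h, (T h : ℝ)) * ∑ h, (T h : ℝ) * (m i - m h) ^ 2 := by
      rw [h1]
      exact Finset.sum_sq_le_sum_mul_sum_of_sq_eq_mul univ
        (fun h _ => (hTpos h).le)
        (fun h _ => by positivity)
        (fun h _ => by ring)
    rw [hTn] at h2
    have h3 : (n:ℝ)^2 * (m i - μ)^2 ≤ (n:ℝ) * ∑ h, (T h : ℝ) * (m i - m h) ^ 2 := by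
      calc (n:ℝ)^2 * (m i - μ)^2 = ((n : ℝ) * (m i - μ)) ^ 2 := by ring
        _ ≤ _ := h2
    have h4 : (n:ℝ) * (m i - μ)^2 ≤ ∑ h, (T h : ℝ) * (m i - m h) ^ 2 := by
      have h3' : (n:ℝ) * ((n:ℝ) * (m i - μ)^2)
          ≤ (n:ℝ) * ∑ h, (T h : ℝ) * (m i - m h) ^ 2 := by
        calc (n:ℝ) * ((n:ℝ) * (m i - μ)^2) = (n:ℝ)^2 * (m i - μ)^2 := by ring
          _ ≤ _ := h3
      exact (mul_le_mul_iff_right₀ hnpos).mp h3'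
    calc (n : ℝ) * ((T i : ℝ) * (m i - μ) ^ 2)
        = (T i : ℝ) * ((n:ℝ) * (m i - μ)^2) := by ring
      _ ≤ (T i : ℝ) * ∑ h, (T h : ℝ) * (m i - m h) ^ 2 :=
          (mul_le_mul_iff_right₀ (hTpos i)).mpr h4
      _ = ∑ h, (T i : ℝ) * (T h : ℝ) * (m i - m h) ^ 2 := by
          rw [Finset.mul_sum]; apply Finset.sum_congr rfl; intro h _; ring
  -- sum over i, dropping the zero diagonal
  have hB : (n : ℝ) * ∑ i, (T i : ℝ) * (m i - μ) ^ 2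
      ≤ ∑ i, ∑ h ∈ univ \ {i}, (T i : ℝ) * (T h : ℝ) * (m i - m h) ^ 2 := by
    rw [Finset.mul_sum]
    apply Finset.sum_le_sum
    intro i _
    refine (hCS i).trans_eq ?_
    rw [← Finset.sum_sdiff (Finset.subset_univ {i})]
    simp
  -- assemble
  have hρ0 : 0 ≤ ρ := hρ.1
  have hρ1 : ρ ≤ 1 := hρ.2
  have hfirst : ∑ i, (T i : ℝ) * ((1 - ρ) * (v i - σ0) - ρ * (m i - μ0))
      = (1 - ρ) * (∑ i, (T i : ℝ) * v i) - (1 - ρ) * σ0 * n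
        - ρ * (n * μ) + ρ * μ0 * n := by
    have : ∀ i, (T i : ℝ) * ((1 - ρ) * (v i - σ0) - ρ * (m i - μ0))
        = (1 - ρ) * ((T i:ℝ) * v i) - (1 - ρ) * σ0 * (T i:ℝ)
          - ρ * ((T i:ℝ) * m i) + ρ * μ0 * (T i:ℝ) := fun i => by ring
    rw [Finset.sum_congr rfl fun i _ => this i]
    simp only [Finset.sum_add_distrib, Finset.sum_sub_distrib, ← Finset.mul_sum, hμ, hTn]
  -- the |·|^2 equal (·)^2
  have habs : ∑ i, ∑ h ∈ univ \ {i}, (T i : ℝ) * (T h : ℝ) * |m i - m h| ^ 2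
      = ∑ i, ∑ h ∈ univ \ {i}, (T i : ℝ) * (T h : ℝ) * (m i - m h) ^ 2 := by
    apply Finset.sum_congr rfl; intro i _; apply Finset.sum_congr rfl; intro h _
    rw [sq_abs]
  rw [habs, hfirst]
  have key : (1 - ρ) * (∑ i, (T i : ℝ) * (m i - μ) ^ 2)
      ≤ (n:ℝ)⁻¹ * ∑ i, ∑ h ∈ univ \ {i}, (T i : ℝ) * (T h : ℝ) * (m i - m h) ^ 2 := by
    calc (1 - ρ) * (∑ i, (T i : ℝ) * (m i - μ) ^ 2)
        ≤ 1 * (∑ i, (T i : ℝ) * (m i - μ) ^ 2) := by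
          apply mul_le_mul_of_nonneg_right (by linarith)
          positivity
      _ = ∑ i, (T i : ℝ) * (m i - μ) ^ 2 := one_mul _
      _ ≤ (n:ℝ)⁻¹ * ((n : ℝ) * ∑ i, (T i : ℝ) * (m i - μ) ^ 2) := by
          rw [← mul_assoc, inv_mul_cancel₀ hn0, one_mul]
      _ ≤ _ := by
          apply mul_le_mul_of_nonneg_left hB (by positivity)
  -- express V via hV
  have hVexpr : V = (n:ℝ)⁻¹ * (∑ i, (T i : ℝ) * v i + ∑ i, (T i : ℝ) * (m i - μ) ^ 2) := by
    rw [← hV, ← mul_assoc, inv_mul_cancel₀ hn0, one_mul]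
  rw [hVexpr]
  have hn2 : ((n:ℝ)^2)⁻¹ = (n:ℝ)⁻¹ * (n:ℝ)⁻¹ := by rw [sq, mul_inv]
  rw [hn2]
  -- now linear arithmetic with key
  have expand : (n : ℝ)⁻¹ * ((1 - ρ) * (∑ i, (T i : ℝ) * v i) - (1 - ρ) * σ0 * ↑n
        - ρ * (↑n * μ) + ρ * μ0 * ↑n)
      = (n:ℝ)⁻¹ * ((1 - ρ) * ∑ i, (T i : ℝ) * v i) - (1-ρ)*σ0 - ρ * μ + ρ * μ0 := by
    field_simp
  rw [expand]
  have h5 := mul_le_mul_of_nonneg_left key (by positivity : (0:ℝ) ≤ (n:ℝ)⁻¹)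
  calc (1 - ρ) * ((n:ℝ)⁻¹ * (∑ i, (T i : ℝ) * v i + ∑ i, (T i : ℝ) * (m i - μ) ^ 2))
        - ρ * μ - ((1 - ρ) * σ0 - ρ * μ0)
      = ((n:ℝ)⁻¹ * ((1 - ρ) * ∑ i, (T i : ℝ) * v i) - (1-ρ)*σ0 - ρ * μ + ρ * μ0)
        + (n:ℝ)⁻¹ * ((1 - ρ) * ∑ i, (T i : ℝ) * (m i - μ) ^ 2) := by ring
    _ ≤ _ := by
        apply add_le_add_right
        calc (n:ℝ)⁻¹ * ((1 - ρ) * ∑ i, (T i : ℝ) * (m i - μ) ^ 2) ≤ _ := h5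
          _ = (n:ℝ)⁻¹ * (n:ℝ)⁻¹ * ∑ i, ∑ h ∈ univ \ {i},
              (T i : ℝ) * (T h : ℝ) * (m i - m h) ^ 2 := by ring
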